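/- Let R₁, R₂ ∈ SO(2) with R₁ ≠ R₂, let b ∈ ℝ², set R' := R₁ − R₂ and z := −(R')⁻¹ b. Then for every Lebesgue measurable set P ⊂ ℝ² and every λ > 0 one has (1/2)·‖R'‖²·λ²·|P \ B_λ(z)| ≤ ∫_P |R'x + b|² dx, where B_λ(z) denotes the open ball of radius λ centered at z. -/

import Mathlib

open Matrix MeasureTheory
open scoped ENNReal

/-- The Frobenius norm of a real 2×2 matrix. -/
noncomputable def frobNorm (A : Matrix (Fin 2) (Fin 2) ℝ) : ℝ :=
  Real.sqrt (∑ i : Fin 2, ∑ j : Fin 2, (A i j) ^ 2)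

/-- The Euclidean norm of a vector in ℝ². -/
noncomputable def evNorm (x : Fin 2 → ℝ) : ℝ :=
  Real.sqrt (∑ i : Fin 2, (x i) ^ 2)

lemma rot_structure (R : Matrix (Fin 2) (Fin 2) ℝ)
    (h : Rᵀ * R = 1 ∧ R.det = 1) : R 1 1 = R 0 0 ∧ R 0 1 = - R 1 0 := by
  obtain ⟨ho, hd⟩ := h
  have e00 := congrFun (congrFun ho 0) 0
  have e01 := congrFun (congrFun ho 0) 1
  have e11 := congrFun (congrFun ho 1) 1
  simp [Matrix.mul_apply, Fin.sum_univ_two, Matrix.one_apply] at e00 e01 e11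
  rw [Matrix.det_fin_two] at hd
  constructor <;> nlinarith [sq_nonneg (R 0 0 - R 1 1), sq_nonneg (R 0 1 + R 1 0)]

set_option maxHeartbeats 1000000 in
theorem SO2_diff_lower_bound
    (R₁ R₂ : Matrix (Fin 2) (Fin 2) ℝ)
    (h₁ : R₁ᵀ * R₁ = 1 ∧ R₁.det = 1) (h₂ : R₂ᵀ * R₂ = 1 ∧ R₂.det = 1)
    (hne : R₁ ≠ R₂) (b : Fin 2 → ℝ)
    (P : Set (Fin 2 → ℝ)) (hP : MeasurableSet P) (lam : ℝ) (hlam : 0 < lam) :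
    ENNReal.ofReal (1 / 2 * frobNorm (R₁ - R₂) ^ 2 * lam ^ 2) *
        volume (P \ {x : Fin 2 → ℝ | evNorm (x - (-(R₁ - R₂)⁻¹.mulVec b)) < lam}) ≤
      ∫⁻ x in P, ENNReal.ofReal ((evNorm ((R₁ - R₂).mulVec x + b)) ^ 2) := by
  set A := R₁ - R₂ with hA
  set p := R₁ 0 0 - R₂ 0 0 with hp
  set q := R₁ 1 0 - R₂ 1 0 with hq
  obtain ⟨h1a, h1b⟩ := rot_structure R₁ h₁
  obtain ⟨h2a, h2b⟩ := rot_structure R₂ h₂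
  have hA00 : A 0 0 = p := by simp [hA, Matrix.sub_apply, hp]
  have hA10 : A 1 0 = q := by simp [hA, Matrix.sub_apply, hq]
  have hA11 : A 1 1 = p := by simp [hA, Matrix.sub_apply, h1a, h2a, hp]
  have hA01 : A 0 1 = -q := by simp [hA, Matrix.sub_apply, h1b, h2b]; ring
  -- p² + q² > 0
  have hpq : 0 < p ^ 2 + q ^ 2 := by
    rcases lt_or_eq_of_le (by positivity : (0:ℝ) ≤ p ^ 2 + q ^ 2) with h | h
    · exact h
    · exfalso; apply hne
      have hp0 : p = 0 := by nlinarith [sq_nonneg p, sq_nonneg q]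
      have hq0 : q = 0 := by nlinarith [sq_nonneg p, sq_nonneg q]
      apply Matrix.ext; intro i j
      fin_cases i <;> fin_cases j
      · show R₁ 0 0 = R₂ 0 0; linarith
      · show R₁ 0 1 = R₂ 0 1; rw [h1b, h2b]; linarith
      · show R₁ 1 0 = R₂ 1 0; linarith
      · show R₁ 1 1 = R₂ 1 1; rw [h1a, h2a]; linarith
  have hdet : A.det = p ^ 2 + q ^ 2 := by
    rw [Matrix.det_fin_two, hA00, hA01, hA10, hA11]; ring
  have hdet0 : IsUnit A.det := by
    rw [hdet]; exact isUnit_iff_ne_zero.mpr (ne_of_gt hpq)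
  -- frobNorm
  have hfrob : 1 / 2 * frobNorm A ^ 2 = p ^ 2 + q ^ 2 := by
    have : frobNorm A ^ 2 = 2 * (p ^ 2 + q ^ 2) := by
      rw [frobNorm, Real.sq_sqrt (by positivity)]
      simp [Fin.sum_univ_two, hA00, hA01, hA10, hA11]; ring
    rw [this]; ring
  set z : Fin 2 → ℝ := -(A⁻¹.mulVec b) with hz
  -- key identity
  have hkey : ∀ x : Fin 2 → ℝ,
      evNorm (A.mulVec x + b) ^ 2 = (p ^ 2 + q ^ 2) * evNorm (x - z) ^ 2 := by
    intro x
    have hb : A.mulVec (x - z) = A.mulVec x + b := by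
      rw [hz, sub_neg_eq_add, Matrix.mulVec_add, Matrix.mulVec_mulVec,
        Matrix.mul_nonsing_inv A hdet0, Matrix.one_mulVec]
    rw [← hb, evNorm, evNorm, Real.sq_sqrt (by positivity), Real.sq_sqrt (by positivity)]
    simp only [Fin.sum_univ_two, Matrix.mulVec, dotProduct, Fin.sum_univ_two,
      hA00, hA01, hA10, hA11]
    ring
  set S := {x : Fin 2 → ℝ | evNorm (x - z) < lam} with hS
  set c : ℝ := p ^ 2 + q ^ 2 with hc
  have hmeas : Measurable fun x : Fin 2 → ℝ =>
      ENNReal.ofReal (evNorm (A.mulVec x + b) ^ 2) := by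
    unfold evNorm
    apply Measurable.ennreal_ofReal
    apply Measurable.pow_const
    apply Real.continuous_sqrt.measurable.comp
    apply Finset.measurable_sum
    intro i _
    apply Measurable.pow_const
    exact ((continuous_apply i).comp
      ((continuous_const.matrix_mulVec continuous_id).add continuous_const : Continuous fun x : Fin 2 → ℝ => A.mulVec x + b)).measurable
  calc ENNReal.ofReal (1 / 2 * frobNorm A ^ 2 * lam ^ 2) * volume (P \ S)
      = ∫⁻ _ in P \ S, ENNReal.ofReal (c * lam ^ 2) := by
        rw [setLIntegral_const, hfrob]
    _ ≤ ∫⁻ x in P \ S, ENNReal.ofReal (evNorm (A.mulVec x + b) ^ 2) := by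
        apply setLIntegral_mono hmeas
        intro x hx
        apply ENNReal.ofReal_le_ofReal
        rw [hkey x]
        have hge : lam ≤ evNorm (x - z) := le_of_not_gt hx.2
        have : lam ^ 2 ≤ evNorm (x - z) ^ 2 :=
          pow_le_pow_left₀ (le_of_lt hlam) hge 2
        nlinarith
    _ ≤ ∫⁻ x in P, ENNReal.ofReal (evNorm (A.mulVec x + b) ^ 2) :=
        lintegral_mono_set Set.diff_subset
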